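/- arXiv:1307.1610 — 2 statements merged into one kernel-verified Lean document; each statement's English description precedes it below -/
import Mathlib

section
/- Let n ∈ ℕ and let p ∈ ℂ[x] be a polynomial with deg p ≤ n. Then p(x) = ∑_{k=0}^{n} C_k · H_{k,q}(x|λ), where C_k = (1/([k]_q! · (1 − λ))) · ( (D_q^k p)(1) − λ · (D_q^k p)(0) ) and D_q^k p denotes the k-fold q-derivative of p. -/
open Finset Polynomial

/-- The `q`-integer `[n]_q = (1 - q^n)/(1 - q)` viewed in `ℂ`. -/
noncomputable def qInt (q : ℝ) (n : ℕ) : ℂ := (1 - (q : ℂ) ^ n) / (1 - (q : ℂ))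

/-- The `q`-factorial `[n]_q! = ∏_{j=1}^n [j]_q`. -/
noncomputable def qFact (q : ℝ) (n : ℕ) : ℂ := ∏ j ∈ Finset.range n, qInt q (j + 1)

/-- The `q`-binomial coefficient `[n]_q!/([k]_q! [n-k]_q!)`. -/
noncomputable def qBinom (q : ℝ) (n k : ℕ) : ℂ := qFact q n / (qFact q k * qFact q (n - k))

/-- The formal `q`-exponential `e_q(t) = ∑ t^n/[n]_q!` in `ℂ[x][[t]]`. -/
noncomputable def qExp (q : ℝ) : PowerSeries (Polynomial ℂ) :=
  PowerSeries.mk fun n => Polynomial.C (1 / qFact q n)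

/-- The formal series `e_q(xt) = ∑ x^n t^n/[n]_q!` in `ℂ[x][[t]]`. -/
noncomputable def qExpX (q : ℝ) : PowerSeries (Polynomial ℂ) :=
  PowerSeries.mk fun n => Polynomial.C (1 / qFact q n) * Polynomial.X ^ n

/-- `H : ℕ → ℂ[x]` is the family of `q`-Frobenius-Euler polynomials `H_{n,q}(x|λ)`:
`(∑ H_n t^n/[n]_q!) ⬝ (e_q(t) - λ) = (1 - λ) e_q(xt)` in `ℂ[x][[t]]`. -/
def IsqFrobeniusEuler (q : ℝ) (lam : ℂ) (H : ℕ → Polynomial ℂ) : Prop :=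
  (PowerSeries.mk fun n => Polynomial.C (1 / qFact q n) * H n) *
      (qExp q - PowerSeries.C (R := Polynomial ℂ) (Polynomial.C lam)) =
    PowerSeries.C (R := Polynomial ℂ) (Polynomial.C (1 - lam)) * qExpX q

/-- The `q`-derivative on `ℂ[x]`, determined by `D_q x^n = [n]_q x^(n-1)`. -/
noncomputable def qDeriv (q : ℝ) (p : Polynomial ℂ) : Polynomial ℂ :=
  p.sum fun n a => Polynomial.C (a * qInt q n) * Polynomial.X ^ (n - 1)


lemma qFact_zero (q : ℝ) : qFact q 0 = 1 := by simp [qFact]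

lemma qFact_succ (q : ℝ) (k : ℕ) : qFact q (k+1) = qFact q k * qInt q (k+1) := by
  simp [qFact, Finset.prod_range_succ]

lemma qInt_zero (q : ℝ) : qInt q 0 = 0 := by simp [qInt]

lemma qInt_succ_ne_zero {q : ℝ} (hq0 : 0 < q) (hq1 : q < 1) (k : ℕ) : qInt q (k+1) ≠ 0 := by
  have h1 : (q:ℂ) ^ (k+1) ≠ 1 := by
    have h : q ^ (k+1) < 1 := pow_lt_one₀ hq0.le hq1 (Nat.succ_ne_zero k)
    intro hc
    rw [← Complex.ofReal_pow, Complex.ofReal_eq_one] at hc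
    exact absurd hc h.ne
  have h2 : (q:ℂ) ≠ 1 := by
    intro hc; rw [Complex.ofReal_eq_one] at hc; exact absurd hc hq1.ne
  exact div_ne_zero (sub_ne_zero.mpr (Ne.symm h1)) (sub_ne_zero.mpr (Ne.symm h2))

lemma qFact_ne_zero {q : ℝ} (hq0 : 0 < q) (hq1 : q < 1) (k : ℕ) : qFact q k ≠ 0 := by
  induction k with
  | zero => simp [qFact_zero]
  | succ n ih => rw [qFact_succ]; exact mul_ne_zero ih (qInt_succ_ne_zero hq0 hq1 n)

lemma qDeriv_coeff (q : ℝ) (p : Polynomial ℂ) (j : ℕ) :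
    (qDeriv q p).coeff j = p.coeff (j+1) * qInt q (j+1) := by
  unfold qDeriv Polynomial.sum
  rw [Polynomial.finset_sum_coeff]
  simp only [Polynomial.coeff_C_mul, Polynomial.coeff_X_pow]
  rw [Finset.sum_eq_single (j+1)]
  · by_cases h : j + 1 ∈ p.support
    · simp
    · have : p.coeff (j+1) = 0 := Polynomial.notMem_support_iff.mp h
      simp [this]
  · intro b _ hb
    by_cases hb0 : b = 0
    · simp [hb0, qInt_zero]
    · have : ¬ (j = b - 1) := by omega
      simp [this]
  · intro h
    have : p.coeff (j+1) = 0 := Polynomial.notMem_support_iff.mp h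
    simp [this]

lemma qDeriv_add (q : ℝ) (p r : Polynomial ℂ) :
    qDeriv q (p + r) = qDeriv q p + qDeriv q r := by
  ext j; simp [qDeriv_coeff, Polynomial.coeff_add, add_mul]

lemma qDeriv_C_mul (q : ℝ) (c : ℂ) (p : Polynomial ℂ) :
    qDeriv q (Polynomial.C c * p) = Polynomial.C c * qDeriv q p := by
  ext j; simp [qDeriv_coeff, Polynomial.coeff_C_mul]; ring

lemma qDeriv_zero (q : ℝ) : qDeriv q 0 = 0 := by
  ext j; simp [qDeriv_coeff]

lemma qDeriv_sub (q : ℝ) (p r : Polynomial ℂ) :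
    qDeriv q (p - r) = qDeriv q p - qDeriv q r := by
  ext j; simp [qDeriv_coeff, Polynomial.coeff_sub, sub_mul]

lemma qDeriv_sum (q : ℝ) (s : Finset ℕ) (f : ℕ → Polynomial ℂ) :
    qDeriv q (∑ i ∈ s, f i) = ∑ i ∈ s, qDeriv q (f i) := by
  ext j; simp [qDeriv_coeff, Polynomial.finset_sum_coeff, Finset.sum_mul]

lemma qDeriv_X_pow (q : ℝ) (n : ℕ) :
    qDeriv q (Polynomial.X ^ n : Polynomial ℂ) = Polynomial.C (qInt q n) * Polynomial.X ^ (n-1) := by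
  ext j
  simp only [qDeriv_coeff, Polynomial.coeff_X_pow, Polynomial.coeff_C_mul]
  rcases n with _ | m
  · simp [qInt_zero]
  · by_cases h : j = m
    · subst h; simp
    · have h1 : ¬ (m + 1 = j + 1) := by omega
      have h2 : ¬ (j = m + 1 - 1) := by omega
      simp [h1, h2, h]

lemma qDeriv_natDegree_le (q : ℝ) (p : Polynomial ℂ) (m : ℕ) (hp : p.natDegree ≤ m + 1) :
    (qDeriv q p).natDegree ≤ m := by
  rw [Polynomial.natDegree_le_iff_coeff_eq_zero] at hp ⊢
  intro N hN
  rw [qDeriv_coeff, hp (N+1) (by omega), zero_mul]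

lemma qDeriv_of_natDegree_zero (q : ℝ) (p : Polynomial ℂ) (hp : p.natDegree ≤ 0) :
    qDeriv q p = 0 := by
  ext j
  rw [Polynomial.natDegree_le_iff_coeff_eq_zero] at hp
  rw [qDeriv_coeff, hp (j+1) (by omega), zero_mul, Polynomial.coeff_zero]

lemma iter_qDeriv_eq_zero (q : ℝ) (m : ℕ) : ∀ (p : Polynomial ℂ), p.natDegree ≤ m →
    (qDeriv q)^[m+1] p = 0 := by
  induction m with
  | zero => intro p hp; simpa using qDeriv_of_natDegree_zero q p hp
  | succ m ih =>
    intro p hp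
    rw [Function.iterate_succ_apply]
    exact ih _ (qDeriv_natDegree_le q p m hp)

lemma iter_qDeriv_add (q : ℝ) (k : ℕ) (p r : Polynomial ℂ) :
    (qDeriv q)^[k] (p + r) = (qDeriv q)^[k] p + (qDeriv q)^[k] r := by
  induction k with
  | zero => simp
  | succ k ih => simp [Function.iterate_succ_apply', ih, qDeriv_add]

lemma iter_qDeriv_C_mul (q : ℝ) (k : ℕ) (c : ℂ) (p : Polynomial ℂ) :
    (qDeriv q)^[k] (Polynomial.C c * p) = Polynomial.C c * (qDeriv q)^[k] p := by
  induction k with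
  | zero => simp
  | succ k ih => simp [Function.iterate_succ_apply', ih, qDeriv_C_mul]

lemma keyE (q : ℝ) (lam : ℂ) (H : ℕ → Polynomial ℂ) (hH : IsqFrobeniusEuler q lam H) (n : ℕ) :
    ∑ i ∈ Finset.range (n+1), Polynomial.C (1/(qFact q i * qFact q (n-i))) * H i
      = Polynomial.C (lam / qFact q n) * H n + Polynomial.C ((1-lam)/qFact q n) * Polynomial.X ^ n := by
  have key3 : ∀ (a b c : ℂ) (p : Polynomial ℂ),
      Polynomial.C a * p * (Polynomial.C b - Polynomial.C c)
        = Polynomial.C (a*b) * p - Polynomial.C (a*c) * p := by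
    intros a b c p; rw [Polynomial.C_mul, Polynomial.C_mul]; ring
  have key2 : ∀ (a b : ℂ) (p : Polynomial ℂ),
      Polynomial.C a * p * Polynomial.C b = Polynomial.C (a*b) * p := by
    intros a b p; rw [Polynomial.C_mul]; ring
  have h := congrArg (PowerSeries.coeff (R := Polynomial ℂ) n) hH
  rw [PowerSeries.coeff_mul, Finset.Nat.sum_antidiagonal_eq_sum_range_succ_mk,
    PowerSeries.coeff_C_mul] at h
  simp only [PowerSeries.coeff_mk, map_sub, PowerSeries.coeff_C, qExp, qExpX] at h
  have hsum : ∑ x ∈ Finset.range (n+1),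
      Polynomial.C (1 / qFact q x) * H x *
        (Polynomial.C (1 / qFact q (n - x)) - if n - x = 0 then Polynomial.C lam else 0)
      = (∑ i ∈ Finset.range (n+1), Polynomial.C (1/(qFact q i * qFact q (n-i))) * H i)
        - Polynomial.C (lam / qFact q n) * H n := by
    rw [Finset.sum_congr rfl (g := fun x => Polynomial.C (1/(qFact q x * qFact q (n-x))) * H x
        - (if x = n then Polynomial.C (lam / qFact q n) * H n else 0))]
    · rw [Finset.sum_sub_distrib, Finset.sum_ite_eq' (Finset.range (n+1)) n]
      simp
    · intro x hx
      simp only [Finset.mem_range] at hx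
      by_cases hxn : x = n
      · rw [hxn]
        simp only [Nat.sub_self, reduceIte, if_pos rfl]
        have e1 : (1 / qFact q n) * (1 / qFact q 0) = 1/(qFact q n * qFact q 0) := by
          rw [div_mul_div_comm, one_mul]
        rw [key3, e1, one_div_mul_eq_div]
      · have h1 : ¬ (n - x = 0) := by omega
        simp only [if_neg h1, if_neg hxn, sub_zero]
        have e1 : (1 / qFact q x) * (1 / qFact q (n - x)) = 1/(qFact q x * qFact q (n-x)) := by
          rw [div_mul_div_comm, one_mul]
        rw [key2, e1]
  rw [hsum] at h
  have hr : (Polynomial.C (1:ℂ) - Polynomial.C lam) * (Polynomial.C (1 / qFact q n) * Polynomial.X ^ n)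
      = Polynomial.C ((1-lam)/qFact q n) * Polynomial.X ^ n := by
    rw [← Polynomial.C_sub, ← mul_assoc, ← Polynomial.C_mul, mul_one_div]
  rw [hr] at h
  linear_combination h

lemma Hn_eq {q : ℝ} (hq0 : 0 < q) (hq1 : q < 1) {lam : ℂ} (hlam : lam ≠ 1)
    (H : ℕ → Polynomial ℂ) (hH : IsqFrobeniusEuler q lam H) (n : ℕ) :
    H n = Polynomial.X ^ n - Polynomial.C (qFact q n/(1-lam)) *
      ∑ i ∈ Finset.range n, Polynomial.C (1/(qFact q i * qFact q (n-i))) * H i := by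
  have h := keyE q lam H hH n
  rw [Finset.sum_range_succ] at h
  simp only [Nat.sub_self, qFact_zero, mul_one] at h
  have hFn := qFact_ne_zero hq0 hq1 n
  have hl : (1:ℂ) - lam ≠ 0 := sub_ne_zero.mpr (Ne.symm hlam)
  have e1 : (1:ℂ)/qFact q n = (1-lam)/qFact q n + lam/qFact q n := by field_simp; ring
  rw [e1, Polynomial.C_add, add_mul] at h
  have h2 : Polynomial.C ((1-lam)/qFact q n) * H n
      = Polynomial.C ((1-lam)/qFact q n) * (Polynomial.X ^ n - Polynomial.C (qFact q n/(1-lam)) *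
        ∑ i ∈ Finset.range n, Polynomial.C (1/(qFact q i * qFact q (n-i))) * H i) := by
    rw [mul_sub, ← mul_assoc, ← Polynomial.C_mul]
    have e2 : (1-lam)/qFact q n * (qFact q n/(1-lam)) = 1 := by field_simp
    rw [e2, Polynomial.C_1, one_mul]
    linear_combination h
  exact mul_left_cancel₀ (Polynomial.C_ne_zero.mpr (div_ne_zero hl hFn)) h2

lemma H_zero {q : ℝ} (hq0 : 0 < q) (hq1 : q < 1) {lam : ℂ} (hlam : lam ≠ 1)
    (H : ℕ → Polynomial ℂ) (hH : IsqFrobeniusEuler q lam H) : H 0 = 1 := by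
  have := Hn_eq hq0 hq1 hlam H hH 0
  simpa using this

lemma H_deg_coeff {q : ℝ} (hq0 : 0 < q) (hq1 : q < 1) {lam : ℂ} (hlam : lam ≠ 1)
    (H : ℕ → Polynomial ℂ) (hH : IsqFrobeniusEuler q lam H) (n : ℕ) :
    (H n).natDegree ≤ n ∧ (H n).coeff n = 1 := by
  induction n using Nat.strong_induction_on with
  | _ n ih =>
    have hS : ∀ j, n ≤ j →
        (∑ i ∈ Finset.range n, Polynomial.C (1/(qFact q i * qFact q (n-i))) * H i).coeff j = 0 := by
      intro j hj
      rw [Polynomial.finset_sum_coeff]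
      apply Finset.sum_eq_zero
      intro i hi
      simp only [Finset.mem_range] at hi
      rw [Polynomial.coeff_C_mul,
        Polynomial.coeff_eq_zero_of_natDegree_lt (lt_of_le_of_lt (ih i hi).1 (lt_of_lt_of_le hi hj)),
        mul_zero]
    rw [Hn_eq hq0 hq1 hlam H hH n]
    constructor
    · rw [Polynomial.natDegree_le_iff_coeff_eq_zero]
      intro N hN
      rw [Polynomial.coeff_sub, Polynomial.coeff_X_pow, if_neg (by omega), Polynomial.coeff_C_mul,
        hS N hN.le, mul_zero, sub_zero]
    · rw [Polynomial.coeff_sub, Polynomial.coeff_X_pow, if_pos rfl, Polynomial.coeff_C_mul,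
        hS n le_rfl, mul_zero, sub_zero]

lemma H_evalDiff {q : ℝ} (hq0 : 0 < q) (hq1 : q < 1) {lam : ℂ} (hlam : lam ≠ 1)
    (H : ℕ → Polynomial ℂ) (hH : IsqFrobeniusEuler q lam H) (n : ℕ) :
    (H n).eval 1 - lam * (H n).eval 0 = if n = 0 then 1 - lam else 0 := by
  induction n using Nat.strong_induction_on with
  | _ n ih =>
    rcases n with _ | m
    · rw [H_zero hq0 hq1 hlam H hH]
      simp
    set n := m + 1 with hn
    have hFn := qFact_ne_zero hq0 hq1 n
    have hl : (1:ℂ) - lam ≠ 0 := sub_ne_zero.mpr (Ne.symm hlam)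
    have h1 := congrArg (Polynomial.eval 1) (keyE q lam H hH n)
    have h0 := congrArg (Polynomial.eval 0) (keyE q lam H hH n)
    simp only [Polynomial.eval_finset_sum, Polynomial.eval_add, Polynomial.eval_mul,
      Polynomial.eval_C, Polynomial.eval_pow, Polynomial.eval_X, one_pow, mul_one,
      zero_pow (Nat.succ_ne_zero m), mul_zero, add_zero] at h1 h0
    have hcomb : ∑ i ∈ Finset.range (n+1), (1/(qFact q i * qFact q (n-i))) *
        ((H i).eval 1 - lam * (H i).eval 0)
        = lam/qFact q n * ((H n).eval 1 - lam * (H n).eval 0) + (1-lam)/qFact q n := by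
      calc ∑ i ∈ Finset.range (n+1), (1/(qFact q i * qFact q (n-i))) *
            ((H i).eval 1 - lam * (H i).eval 0)
          = ∑ i ∈ Finset.range (n+1), ((1/(qFact q i * qFact q (n-i))) * (H i).eval 1
              - lam * ((1/(qFact q i * qFact q (n-i))) * (H i).eval 0)) := by
            apply Finset.sum_congr rfl; intros; ring
        _ = (∑ i ∈ Finset.range (n+1), (1/(qFact q i * qFact q (n-i))) * (H i).eval 1)
              - lam * ∑ i ∈ Finset.range (n+1), (1/(qFact q i * qFact q (n-i))) * (H i).eval 0 := by
            rw [Finset.sum_sub_distrib, Finset.mul_sum]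
        _ = lam/qFact q n * ((H n).eval 1 - lam * (H n).eval 0) + (1-lam)/qFact q n := by
            rw [h1, h0]; ring
    rw [Finset.sum_range_succ] at hcomb
    have hsmall : ∑ i ∈ Finset.range n, (1/(qFact q i * qFact q (n-i))) *
        ((H i).eval 1 - lam * (H i).eval 0) = (1-lam)/qFact q n := by
      rw [Finset.sum_eq_single_of_mem 0 (Finset.mem_range.mpr (Nat.succ_pos m))]
      · rw [ih 0 (Nat.succ_pos m), if_pos rfl, Nat.sub_zero, qFact_zero, one_mul, one_div_mul_eq_div]
      · intro i hi hi0
        rw [ih i (Finset.mem_range.mp hi), if_neg hi0, mul_zero]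
    rw [hsmall, Nat.sub_self, qFact_zero, mul_one] at hcomb
    -- hcomb : (1-lam)/Fn + (1/Fn) * a = lam/Fn * a + (1-lam)/Fn
    rw [if_neg (Nat.succ_ne_zero m)]
    have hz : ((H n).eval 1 - lam * (H n).eval 0) * ((1-lam)/qFact q n) = 0 := by
      linear_combination hcomb
    rcases mul_eq_zero.mp hz with h | h
    · exact h
    · exact absurd h (div_ne_zero hl hFn)

lemma qDeriv_H {q : ℝ} (hq0 : 0 < q) (hq1 : q < 1) {lam : ℂ} (hlam : lam ≠ 1)
    (H : ℕ → Polynomial ℂ) (hH : IsqFrobeniusEuler q lam H) (n : ℕ) :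
    qDeriv q (H n) = Polynomial.C (qInt q n) * H (n-1) := by
  induction n using Nat.strong_induction_on with
  | _ n ih =>
    rcases n with _ | m
    · rw [H_zero hq0 hq1 hlam H hH, qInt_zero]
      have : (1 : Polynomial ℂ).natDegree ≤ 0 := by simp
      rw [qDeriv_of_natDegree_zero q _ this]
      simp
    · have hl : (1:ℂ) - lam ≠ 0 := sub_ne_zero.mpr (Ne.symm hlam)
      have hFM := qFact_ne_zero hq0 hq1 (m+1)
      have hFm := qFact_ne_zero hq0 hq1 m
      have h := congrArg (qDeriv q) (keyE q lam H hH (m+1))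
      rw [qDeriv_sum, qDeriv_add, qDeriv_C_mul, qDeriv_C_mul, qDeriv_X_pow,
        Nat.add_sub_cancel] at h
      simp only [qDeriv_C_mul] at h
      rw [Finset.sum_range_succ] at h
      have hre : ∑ i ∈ Finset.range (m+1),
          Polynomial.C (1/(qFact q i * qFact q (m+1-i))) * qDeriv q (H i)
          = ∑ j ∈ Finset.range m, Polynomial.C (1/(qFact q j * qFact q (m-j))) * H j := by
        rw [Finset.sum_range_succ']
        have h0 : Polynomial.C (1/(qFact q 0 * qFact q (m+1-0))) * qDeriv q (H 0) = 0 := by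
          rw [ih 0 (Nat.succ_pos m), qInt_zero]
          simp
        rw [h0, add_zero]
        apply Finset.sum_congr rfl
        intro j hj
        simp only [Finset.mem_range] at hj
        rw [ih (j+1) (by omega), Nat.add_sub_cancel]
        have e : m + 1 - (j+1) = m - j := by omega
        rw [e, ← mul_assoc, ← Polynomial.C_mul]
        congr 2
        rw [qFact_succ]
        have h1 := qFact_ne_zero hq0 hq1 j
        have h2 := qFact_ne_zero hq0 hq1 (m-j)
        have h3 := qInt_succ_ne_zero hq0 hq1 j
        field_simp
      rw [hre] at h
      have hsub := keyE q lam H hH m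
      rw [Finset.sum_range_succ] at hsub
      have hsub' : ∑ j ∈ Finset.range m, Polynomial.C (1/(qFact q j * qFact q (m-j))) * H j
          = Polynomial.C (lam/qFact q m) * H m + Polynomial.C ((1-lam)/qFact q m) * Polynomial.X ^ m
            - Polynomial.C (1/(qFact q m * qFact q (m-m))) * H m := by
        linear_combination hsub
      rw [hsub'] at h
      simp only [Nat.sub_self, qFact_zero, mul_one] at h
      -- now cancel
      have E1 : Polynomial.C ((1-lam)/qFact q (m+1)) * Polynomial.C (qInt q (m+1))
          = Polynomial.C ((1-lam)/qFact q m) := by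
        rw [← Polynomial.C_mul]
        congr 1
        rw [qFact_succ]
        have h3 := qInt_succ_ne_zero hq0 hq1 m
        field_simp
      have E2 : Polynomial.C ((1:ℂ)/(qFact q (m+1))) - Polynomial.C (lam/qFact q (m+1))
          = Polynomial.C ((1-lam)/qFact q (m+1)) := by
        rw [← Polynomial.C_sub, sub_div]
      have E3 : Polynomial.C ((1:ℂ)/(qFact q m)) - Polynomial.C (lam/qFact q m)
          = Polynomial.C ((1-lam)/qFact q m) := by
        rw [← Polynomial.C_sub, sub_div]
      have h2 : Polynomial.C ((1-lam)/qFact q (m+1)) * qDeriv q (H (m+1))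
          = Polynomial.C ((1-lam)/qFact q (m+1)) *
            (Polynomial.C (qInt q (m+1)) * H ((m+1)-1)) := by
        rw [Nat.add_sub_cancel]
        linear_combination h + (H m) * E3 + (Polynomial.X^m - H m) * E1
          - qDeriv q (H (m+1)) * E2
      exact mul_left_cancel₀ (Polynomial.C_ne_zero.mpr (div_ne_zero hl hFM)) h2

lemma iter_qDeriv_H {q : ℝ} (hq0 : 0 < q) (hq1 : q < 1) {lam : ℂ} (hlam : lam ≠ 1)
    (H : ℕ → Polynomial ℂ) (hH : IsqFrobeniusEuler q lam H) :
    ∀ k m : ℕ, k ≤ m → (qDeriv q)^[k] (H m)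
      = Polynomial.C (qFact q m / qFact q (m-k)) * H (m-k) := by
  intro k
  induction k with
  | zero =>
    intro m _
    simp [div_self (qFact_ne_zero hq0 hq1 m)]
  | succ k ihk =>
    intro m hk
    rw [Function.iterate_succ_apply', ihk m (by omega), qDeriv_C_mul,
      qDeriv_H hq0 hq1 hlam H hH]
    have e1 : m - k = (m - (k+1)) + 1 := by omega
    have e2 : m - k - 1 = m - (k+1) := by omega
    rw [e2, ← mul_assoc, ← Polynomial.C_mul]
    congr 2
    rw [e1, qFact_succ]
    have h1 := qFact_ne_zero hq0 hq1 (m - (k+1))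
    have h2 := qInt_succ_ne_zero hq0 hq1 (m - (k+1))
    field_simp

lemma iter_qDeriv_H_gt {q : ℝ} (hq0 : 0 < q) (hq1 : q < 1) {lam : ℂ} (hlam : lam ≠ 1)
    (H : ℕ → Polynomial ℂ) (hH : IsqFrobeniusEuler q lam H) (k m : ℕ) (hk : m < k) :
    (qDeriv q)^[k] (H m) = 0 := by
  have h1 : (qDeriv q)^[m+1] (H m) = 0 :=
    iter_qDeriv_eq_zero q m (H m) (H_deg_coeff hq0 hq1 hlam H hH m).1
  have : k = (k - (m+1)) + (m+1) := by omega
  rw [this, Function.iterate_add_apply, h1, Function.iterate_fixed (qDeriv_zero q)]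

lemma evalDiff_iter_H {q : ℝ} (hq0 : 0 < q) (hq1 : q < 1) {lam : ℂ} (hlam : lam ≠ 1)
    (H : ℕ → Polynomial ℂ) (hH : IsqFrobeniusEuler q lam H) (k m : ℕ) :
    ((qDeriv q)^[k] (H m)).eval 1 - lam * ((qDeriv q)^[k] (H m)).eval 0
      = if k = m then qFact q m * (1 - lam) else 0 := by
  rcases lt_trichotomy k m with h | h | h
  · rw [if_neg h.ne, iter_qDeriv_H hq0 hq1 hlam H hH k m h.le]
    simp only [Polynomial.eval_mul, Polynomial.eval_C]
    have := H_evalDiff hq0 hq1 hlam H hH (m - k)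
    rw [if_neg (by omega)] at this
    linear_combination (qFact q m / qFact q (m-k)) * this
  · subst h
    rw [if_pos rfl, iter_qDeriv_H hq0 hq1 hlam H hH k k le_rfl, Nat.sub_self,
      H_zero hq0 hq1 hlam H hH, qFact_zero]
    simp only [mul_one, Polynomial.eval_C, div_one]
    ring
  · rw [if_neg (by omega), iter_qDeriv_H_gt hq0 hq1 hlam H hH k m h]
    simp

/-- Every `p ∈ ℂ[x]` with `deg p ≤ n` expands as
`p = ∑_{k=0}^n C_k H_{k,q}(x|λ)` with
`C_k = (((D_q)^k p)(1) - λ ((D_q)^k p)(0)) / ([k]_q! (1-λ))`. -/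
theorem expansion_in_qFrobeniusEuler_basis
    (q : ℝ) (hq0 : 0 < q) (hq1 : q < 1) (lam : ℂ) (hlam : lam ≠ 1)
    (H : ℕ → Polynomial ℂ) (hH : IsqFrobeniusEuler q lam H)
    (n : ℕ) (p : Polynomial ℂ) (hp : p.natDegree ≤ n) :
    p = ∑ k ∈ Finset.range (n + 1),
      Polynomial.C ((1 / (qFact q k * (1 - lam))) *
        (((qDeriv q)^[k] p).eval 1 - lam * ((qDeriv q)^[k] p).eval 0)) * H k := by
  have hl : (1:ℂ) - lam ≠ 0 := sub_ne_zero.mpr (Ne.symm hlam)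
  induction n generalizing p with
  | zero =>
    obtain ⟨a, ha⟩ := Polynomial.natDegree_eq_zero.mp (Nat.le_zero.mp hp)
    rw [Finset.sum_range_one, H_zero hq0 hq1 hlam H hH, mul_one, ← ha]
    simp only [Function.iterate_zero, id_eq, Polynomial.eval_C, qFact_zero, one_mul]
    congr 1
    field_simp
  | succ n ihn =>
    set c := p.coeff (n+1) with hc
    set r := p - Polynomial.C c * H (n+1) with hr
    have hpr : p = r + Polynomial.C c * H (n+1) := by rw [hr]; ring
    have hHd := H_deg_coeff hq0 hq1 hlam H hH (n+1)
    have hrdeg : r.natDegree ≤ n := by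
      rw [Polynomial.natDegree_le_iff_coeff_eq_zero]
      intro N hN
      rw [hr, Polynomial.coeff_sub, Polynomial.coeff_C_mul]
      rcases eq_or_lt_of_le (Nat.succ_le_of_lt hN) with h | h
      · rw [← h, hHd.2, mul_one, hc, sub_self]
      · rw [Polynomial.coeff_eq_zero_of_natDegree_lt (lt_of_le_of_lt hp h),
          Polynomial.coeff_eq_zero_of_natDegree_lt (lt_of_le_of_lt hHd.1 h), mul_zero, sub_zero]
    have hihr := ihn r hrdeg
    have hiter : ∀ k, (qDeriv q)^[k] p
        = (qDeriv q)^[k] r + Polynomial.C c * (qDeriv q)^[k] (H (n+1)) := by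
      intro k
      rw [hpr, iter_qDeriv_add, iter_qDeriv_C_mul]
    rw [Finset.sum_range_succ]
    have hlast : Polynomial.C ((1 / (qFact q (n+1) * (1 - lam))) *
        (((qDeriv q)^[n+1] p).eval 1 - lam * ((qDeriv q)^[n+1] p).eval 0)) = Polynomial.C c := by
      congr 1
      rw [hiter (n+1), iter_qDeriv_eq_zero q n r hrdeg]
      have hv := evalDiff_iter_H hq0 hq1 hlam H hH (n+1) (n+1)
      rw [if_pos rfl] at hv
      rw [Function.iterate_succ_apply] at hv
      simp only [zero_add, Polynomial.eval_mul, Polynomial.eval_C, Function.iterate_succ_apply]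
      have hF := qFact_ne_zero hq0 hq1 (n+1)
      field_simp
      linear_combination c * hv
    rw [hlast]
    have hsum : ∑ k ∈ Finset.range (n+1),
        Polynomial.C ((1 / (qFact q k * (1 - lam))) *
          (((qDeriv q)^[k] p).eval 1 - lam * ((qDeriv q)^[k] p).eval 0)) * H k
        = ∑ k ∈ Finset.range (n+1),
        Polynomial.C ((1 / (qFact q k * (1 - lam))) *
          (((qDeriv q)^[k] r).eval 1 - lam * ((qDeriv q)^[k] r).eval 0)) * H k := by
      apply Finset.sum_congr rfl
      intro k hk
      simp only [Finset.mem_range] at hk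
      have hv := evalDiff_iter_H hq0 hq1 hlam H hH k (n+1)
      rw [if_neg (by omega)] at hv
      rw [hiter k]
      simp only [Polynomial.eval_add, Polynomial.eval_mul, Polynomial.eval_C]
      congr 2
      linear_combination (1 / (qFact q k * (1 - lam))) * ((c : ℂ) * hv)
    rw [hsum, ← hihr]
    exact hpr
end

section
/- For every n ∈ ℕ, the q-Bernoulli polynomial expands in the q-Frobenius–Euler basis as B_{n,q}(x) = (1/(1 − λ)) · ∑_{k=0}^{n} C(n,k)_q · ( B_{n−k,q}(1) − λ · B_{n−k,q} ) · H_{k,q}(x|λ), where B_{n−k,q}(1) is the evaluation of B_{n−k,q}(x) at x = 1. -/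
open Finset Polynomial

/-- `B : ℕ → ℂ[x]` is the family of `q`-Bernoulli polynomials `B_{n,q}(x)`:
`(∑ B_n t^n/[n]_q!) ⬝ (e_q(t) - 1) = t e_q(xt)` in `ℂ[x][[t]]`. -/
def IsqBernoulli (q : ℝ) (B : ℕ → Polynomial ℂ) : Prop :=
  (PowerSeries.mk fun n => Polynomial.C (1 / qFact q n) * B n) * (qExp q - 1) =
    PowerSeries.X * qExpX q

/-- `B_{n,q}(x) = (1/(1-λ)) ∑_{k=0}^n C(n,k)_q (B_{n-k,q}(1) - λ B_{n-k,q}) H_{k,q}(x|λ)`. -/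
theorem qBernoulli_expansion_in_qFrobeniusEuler_basis
    (q : ℝ) (hq0 : 0 < q) (hq1 : q < 1) (lam : ℂ) (hlam : lam ≠ 1)
    (H : ℕ → Polynomial ℂ) (hH : IsqFrobeniusEuler q lam H)
    (B : ℕ → Polynomial ℂ) (hB : IsqBernoulli q B) (n : ℕ) :
    B n = Polynomial.C (1 / (1 - lam)) * ∑ k ∈ Finset.range (n + 1),
      Polynomial.C (qBinom q n k *
        ((B (n - k)).eval 1 - lam * (B (n - k)).eval 0)) * H k := by
  classical
  have hq : (1 : ℂ) - (q : ℂ) ≠ 0 := sub_ne_zero.mpr (by exact_mod_cast hq1.ne')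
  have hqFact : ∀ m, qFact q m ≠ 0 := by
    intro m
    refine Finset.prod_ne_zero_iff.mpr fun j _ => ?_
    unfold qInt
    refine div_ne_zero (sub_ne_zero.mpr ?_) hq
    have h1 : q ^ (j + 1) < 1 := pow_lt_one₀ hq0.le hq1 (Nat.succ_ne_zero j)
    exact_mod_cast h1.ne'
  have hqFact0 : qFact q 0 = 1 := by simp [qFact]
  have hqFact1 : qFact q 1 = 1 := by
    simp [qFact, qInt, div_self hq]
  have hln : (1 : ℂ) - lam ≠ 0 := sub_ne_zero.mpr (Ne.symm hlam)
  set E := qExp q with hE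
  set El := qExp q - PowerSeries.C (R := Polynomial ℂ) (Polynomial.C lam) with hEldef
  have hE1 : E - 1 ≠ 0 := by
    intro h
    have := congrArg (PowerSeries.coeff (R := Polynomial ℂ) 1) h
    simp [hE, qExp, PowerSeries.coeff_one, hqFact1] at this
  have hEl : El ≠ 0 := by
    intro h
    have := congrArg (PowerSeries.coeff (R := Polynomial ℂ) 0) h
    simp [hEldef, hE, qExp, PowerSeries.coeff_C, hqFact0] at this
    exact hln (by simpa using congrArg (Polynomial.eval (0:ℂ)) this)
  -- mapped Bernoulli relation at a point a
  have hmap : ∀ a : ℂ,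
      (PowerSeries.mk fun m => Polynomial.C (1 / qFact q m * ((B m).eval a))) * (E - 1) =
        PowerSeries.X * PowerSeries.mk (fun m => Polynomial.C (1 / qFact q m * a ^ m)) := by
    intro a
    have hBe : (PowerSeries.mk fun m => Polynomial.C (1 / qFact q m) * B m) * (qExp q - 1) =
        PowerSeries.X * qExpX q := hB
    have h := congrArg (PowerSeries.map (Polynomial.C.comp (Polynomial.evalRingHom a))) hBe
    rw [map_mul, map_sub, map_one, map_mul, PowerSeries.map_X] at h
    have h1 : PowerSeries.map (Polynomial.C.comp (Polynomial.evalRingHom a))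
        (PowerSeries.mk fun m => Polynomial.C (1 / qFact q m) * B m)
        = PowerSeries.mk fun m => Polynomial.C (1 / qFact q m * ((B m).eval a)) := by
      ext m
      simp [PowerSeries.coeff_map]
    have h2 : PowerSeries.map (Polynomial.C.comp (Polynomial.evalRingHom a)) (qExp q)
        = qExp q := by
      ext m
      simp [PowerSeries.coeff_map, qExp]
    have h3 : PowerSeries.map (Polynomial.C.comp (Polynomial.evalRingHom a)) (qExpX q)
        = PowerSeries.mk fun m => Polynomial.C (1 / qFact q m * a ^ m) := by
      ext m
      simp [PowerSeries.coeff_map, qExpX]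
    rw [h1, h2, h3] at h
    exact h
  have hM1 : (PowerSeries.mk fun m => Polynomial.C (1 / qFact q m * (1:ℂ) ^ m)) = E := by
    ext m; simp [hE, qExp]
  have hM0 : (PowerSeries.mk fun m => Polynomial.C (1 / qFact q m * (0:ℂ) ^ m)) = 1 := by
    ext m
    cases m with
    | zero => simp [hqFact0, PowerSeries.coeff_one]
    | succ m => simp [PowerSeries.coeff_one]
  set G := PowerSeries.mk fun m =>
    Polynomial.C (1 / qFact q m * ((B m).eval 1 - lam * (B m).eval 0)) with hGdef
  have hGsplit : G = (PowerSeries.mk fun m => Polynomial.C (1 / qFact q m * ((B m).eval 1)))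
      - PowerSeries.C (R := Polynomial ℂ) (Polynomial.C lam) *
        (PowerSeries.mk fun m => Polynomial.C (1 / qFact q m * ((B m).eval 0))) := by
    ext m
    simp only [hGdef, PowerSeries.coeff_mk, map_sub, PowerSeries.coeff_C_mul]
    rw [← Polynomial.C_mul, ← Polynomial.C_sub]
    congr 1
    ring
  have hG : G * (E - 1) = PowerSeries.X * El := by
    rw [hGsplit, sub_mul, mul_assoc, hmap 1, hmap 0, hM1, hM0, hEldef, ← hE]
    ring
  -- main identity
  set Bs := PowerSeries.mk fun m => Polynomial.C (1 / qFact q m) * B m with hBs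
  set Hs := PowerSeries.mk fun m => Polynomial.C (1 / qFact q m) * H m with hHs
  set Cs := PowerSeries.C (R := Polynomial ℂ) (Polynomial.C (1 - lam)) with hCs
  have hHeq : Hs * El = Cs * qExpX q := hH
  have hBeq : Bs * (E - 1) = PowerSeries.X * qExpX q := hB
  have key : Cs * Bs = G * Hs := by
    refine mul_right_cancel₀ (mul_ne_zero hE1 hEl) ?_
    calc Cs * Bs * ((E - 1) * El) = Cs * (Bs * (E - 1)) * El := by ring
      _ = Cs * (PowerSeries.X * qExpX q) * El := by rw [hBeq]
      _ = (PowerSeries.X * El) * (Cs * qExpX q) := by ring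
      _ = (G * (E - 1)) * (Hs * El) := by rw [hG, hHeq]
      _ = G * Hs * ((E - 1) * El) := by ring
  have hc := congrArg (PowerSeries.coeff (R := Polynomial ℂ) n) key
  rw [hCs, PowerSeries.coeff_C_mul, mul_comm G Hs, PowerSeries.coeff_mul] at hc
  rw [Finset.Nat.sum_antidiagonal_eq_sum_range_succ
    (fun i j => (PowerSeries.coeff (R := Polynomial ℂ) i) Hs * (PowerSeries.coeff (R := Polynomial ℂ) j) G)] at hc
  simp only [hHs, hGdef, PowerSeries.coeff_mk, hBs] at hc
  -- now finish
  have key2 : B n = Polynomial.C (qFact q n / (1 - lam)) *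
      ∑ k ∈ Finset.range (n + 1),
        Polynomial.C (1 / qFact q k) * H k *
          Polynomial.C (1 / qFact q (n - k) * ((B (n - k)).eval 1 - lam * (B (n - k)).eval 0)) := by
    rw [← hc]
    rw [← mul_assoc, ← Polynomial.C_mul, ← mul_assoc, ← Polynomial.C_mul]
    have hn := hqFact n
    have : qFact q n / (1 - lam) * (1 - lam) * (1 / qFact q n) = 1 := by
      field_simp
    rw [this, Polynomial.C_1, one_mul]
  rw [key2, Finset.mul_sum, Finset.mul_sum]
  refine Finset.sum_congr rfl fun k hk => ?_
  have h1 : Polynomial.C (qFact q n / (1 - lam)) *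
      (Polynomial.C (1 / qFact q k) * H k *
        Polynomial.C (1 / qFact q (n - k) * ((B (n - k)).eval 1 - lam * (B (n - k)).eval 0)))
      = Polynomial.C (qFact q n / (1 - lam) * (1 / qFact q k) *
          (1 / qFact q (n - k) * ((B (n - k)).eval 1 - lam * (B (n - k)).eval 0))) * H k := by
    simp only [Polynomial.C_mul]; ring
  have h2 : Polynomial.C (1 / (1 - lam)) *
      (Polynomial.C (qBinom q n k * ((B (n - k)).eval 1 - lam * (B (n - k)).eval 0)) * H k)
      = Polynomial.C (1 / (1 - lam) * (qBinom q n k *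
          ((B (n - k)).eval 1 - lam * (B (n - k)).eval 0))) * H k := by
    simp only [Polynomial.C_mul]; ring
  have hk1 := hqFact k
  have hk2 := hqFact (n - k)
  have hk3 := hqFact n
  have hsc : qFact q n / (1 - lam) * (1 / qFact q k) *
      (1 / qFact q (n - k) * ((B (n - k)).eval 1 - lam * (B (n - k)).eval 0)) =
      1 / (1 - lam) * (qFact q n / (qFact q k * qFact q (n - k)) *
        ((B (n - k)).eval 1 - lam * (B (n - k)).eval 0)) := by
    ring
  rw [h1, h2, qBinom, hsc]
end
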